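/- Let g : R^m → R be concave differentiable with (1/ρ)-Lipschitz gradient, attaining its maximum value f* at λ*. Let a sequence satisfy λ_{i+1} = λ_i + ρ(∇g(λ_i) + e_i) with λ₀ = 0, where the error satisfies ‖e_i‖ ≤ ε_i. If ‖λ_{i+1} − λ*‖ ≤ C for all i, then for every k ≥ 1 the averaged point λ̄_k := (1/k)Σ_{i=1}^k λ_i satisfies f* − g(λ̄_k) ≤ (1/k)[ ‖λ*‖²/(2ρ) + C Σ_{i=0}^{k−1} ε_i ]. -/

import Mathlib

open RealInnerProductSpace

section Aux

variable {m : ℕ}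

lemma my_fderiv_apply_eq_inner (g : EuclideanSpace ℝ (Fin m) → ℝ)
    (x v : EuclideanSpace ℝ (Fin m)) :
    fderiv ℝ g x v = ⟪gradient g x, v⟫ := by
  conv_lhs => rw [← (InnerProductSpace.toDual ℝ (EuclideanSpace ℝ (Fin m))).apply_symm_apply
    (fderiv ℝ g x)]
  rw [InnerProductSpace.toDual_apply_apply]
  rfl

lemma my_line_hasDerivAt (x v : EuclideanSpace ℝ (Fin m)) (t : ℝ) :
    HasDerivAt (fun s : ℝ => x + s • v) v t := by
  have h : HasDerivAt (fun s : ℝ => s • v) ((1 : ℝ) • v) t := (hasDerivAt_id t).smul_const v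
  simpa using h.const_add x

lemma my_comp_hasDerivAt (g : EuclideanSpace ℝ (Fin m) → ℝ) (hdiff : Differentiable ℝ g)
    (x v : EuclideanSpace ℝ (Fin m)) (t : ℝ) :
    HasDerivAt (fun s : ℝ => g (x + s • v)) ⟪gradient g (x + t • v), v⟫ t := by
  have h := (hdiff (x + t • v)).hasFDerivAt.comp_hasDerivAt t (my_line_hasDerivAt x v t)
  rwa [my_fderiv_apply_eq_inner] at h

/-- Gradient inequality for concave functions. -/
lemma my_concave_grad_ineq (g : EuclideanSpace ℝ (Fin m) → ℝ)
    (hconc : ConcaveOn ℝ Set.univ g) (hdiff : Differentiable ℝ g)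
    (x z : EuclideanSpace ℝ (Fin m)) :
    g z ≤ g x + ⟪gradient g x, z - x⟫ := by
  set φ : ℝ → ℝ := fun t => g (x + t • (z - x)) with hφ
  have hφconc : ConcaveOn ℝ Set.univ φ := by
    have h := hconc.comp_affineMap (AffineMap.lineMap x z)
    have heq : (g ∘ (AffineMap.lineMap x z) : ℝ → ℝ) = φ := by
      funext t
      simp [φ, AffineMap.lineMap_apply, add_comm (t • (z - x)) x]
    rw [heq] at h
    simpa using h
  have hder : HasDerivAt φ ⟪gradient g (x + (0:ℝ) • (z - x)), z - x⟫ 0 :=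
    my_comp_hasDerivAt g hdiff x (z - x) 0
  have hslope := hφconc.slope_le_of_hasDerivAt (Set.mem_univ (0:ℝ)) (Set.mem_univ (1:ℝ))
    one_pos hder
  have h0 : φ 0 = g x := by simp [φ]
  have h1 : φ 1 = g z := by simp [φ]
  have hs : slope φ 0 1 = φ 1 - φ 0 := by simp [slope_def_field]
  rw [hs, h0, h1] at hslope
  simpa [zero_smul, add_zero] using (by linarith : g z ≤ g x + ⟪gradient g (x + (0:ℝ) • (z - x)), z - x⟫)

/-- Descent lemma: lower bound for (1/ρ)-smooth functions. -/
lemma my_descent (ρ : ℝ) (hρ : 0 < ρ) (g : EuclideanSpace ℝ (Fin m) → ℝ)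
    (hdiff : Differentiable ℝ g)
    (hlip : ∀ a b : EuclideanSpace ℝ (Fin m),
      ‖gradient g a - gradient g b‖ ≤ (1 / ρ) * ‖a - b‖)
    (x y : EuclideanSpace ℝ (Fin m)) :
    g x + ⟪gradient g x, y - x⟫ - ‖y - x‖ ^ 2 / (2 * ρ) ≤ g y := by
  set v : EuclideanSpace ℝ (Fin m) := y - x with hv
  set c : ℝ := ⟪gradient g x, v⟫ with hc
  set η : ℝ → ℝ := fun t => g (x + t • v) - t * c + t ^ 2 * ((1 / (2 * ρ)) * ‖v‖ ^ 2) with hη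
  have hder : ∀ t : ℝ, HasDerivAt η
      (⟪gradient g (x + t • v), v⟫ - c + (2 * t) * ((1 / (2 * ρ)) * ‖v‖ ^ 2)) t := by
    intro t
    have h1 := my_comp_hasDerivAt g hdiff x v t
    have h2 : HasDerivAt (fun s : ℝ => s * c) c t := hasDerivAt_mul_const c
    have h3 : HasDerivAt (fun s : ℝ => s ^ 2 * ((1 / (2 * ρ)) * ‖v‖ ^ 2))
        ((2 * t) * ((1 / (2 * ρ)) * ‖v‖ ^ 2)) t := by
      have := (hasDerivAt_pow 2 t).mul_const ((1 / (2 * ρ)) * ‖v‖ ^ 2)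
      simpa [pow_one] using this
    exact (h1.sub h2).add h3
  have hmono : MonotoneOn η (Set.Icc 0 1) := by
    apply monotoneOn_of_deriv_nonneg (convex_Icc 0 1)
    · exact (fun t _ => ((hder t).differentiableAt).continuousAt.continuousWithinAt)
    · intro t _
      exact ((hder t).differentiableAt).differentiableWithinAt
    · intro t ht
      rw [interior_Icc] at ht
      rw [(hder t).deriv]
      have hlb : -((1 / ρ) * (t * ‖v‖ ^ 2)) ≤ ⟪gradient g (x + t • v), v⟫ - c := by
        have hinner : ⟪gradient g (x + t • v), v⟫ - c
            = ⟪gradient g (x + t • v) - gradient g x, v⟫ := by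
          rw [hc, inner_sub_left]
        rw [hinner]
        have habs := abs_real_inner_le_norm (gradient g (x + t • v) - gradient g x) v
        have hlipb := hlip (x + t • v) x
        have hnorm : ‖x + t • v - x‖ = t * ‖v‖ := by
          rw [add_sub_cancel_left, norm_smul, Real.norm_eq_abs, abs_of_pos ht.1]
        rw [hnorm] at hlipb
        have h1 : ‖gradient g (x + t • v) - gradient g x‖ * ‖v‖ ≤ (1 / ρ) * (t * ‖v‖) * ‖v‖ :=
          mul_le_mul_of_nonneg_right hlipb (norm_nonneg v)
        have h2 := neg_abs_le ⟪gradient g (x + t • v) - gradient g x, v⟫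
        nlinarith [abs_nonneg ⟪gradient g (x + t • v) - gradient g x, v⟫]
      have heq : (2 * t) * ((1 / (2 * ρ)) * ‖v‖ ^ 2) = (1 / ρ) * (t * ‖v‖ ^ 2) := by
        field_simp
      rw [heq]; linarith
  have hle : η 0 ≤ η 1 := hmono (by norm_num) (by norm_num) zero_le_one
  have h0 : η 0 = g x := by simp [η]
  have h1 : η 1 = g y - c + (1 / (2 * ρ)) * ‖v‖ ^ 2 := by
    simp [η, hv, add_sub_cancel]
  rw [h0, h1] at hle
  have : ‖v‖ ^ 2 / (2 * ρ) = (1 / (2 * ρ)) * ‖v‖ ^ 2 := by ring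
  rw [hv] at hc ⊢
  rw [this]
  linarith [hle]

end Aux

/-- Dual suboptimality of inexact gradient ascent with stepsize `ρ` on a `(1/ρ)`-smooth
concave function: `f* − g(λ̄_k) ≤ (1/k)[‖λ*‖²/(2ρ) + C Σ_{i=0}^{k−1} ε_i]`. -/
theorem inexact_gradient_ascent_averaged_suboptimality (m : ℕ) (ρ C : ℝ) (hρ : 0 < ρ)
    (g : EuclideanSpace ℝ (Fin m) → ℝ)
    (hconc : ConcaveOn ℝ Set.univ g) (hdiff : Differentiable ℝ g)
    (hlip : ∀ a b : EuclideanSpace ℝ (Fin m),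
      ‖gradient g a - gradient g b‖ ≤ (1 / ρ) * ‖a - b‖)
    (lamstar : EuclideanSpace ℝ (Fin m)) (fstar : ℝ)
    (hfstar : fstar = g lamstar) (hmax : ∀ lam, g lam ≤ g lamstar)
    (lam : ℕ → EuclideanSpace ℝ (Fin m)) (e : ℕ → EuclideanSpace ℝ (Fin m)) (ε : ℕ → ℝ)
    (hlam0 : lam 0 = 0)
    (hstep : ∀ i, lam (i + 1) = lam i + ρ • (gradient g (lam i) + e i))
    (herr : ∀ i, ‖e i‖ ≤ ε i)
    (hbound : ∀ i, ‖lam (i + 1) - lamstar‖ ≤ C)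
    (k : ℕ) (hk : 1 ≤ k) :
    fstar - g ((k : ℝ)⁻¹ • ∑ i ∈ Finset.Icc 1 k, lam i) ≤
      (1 / k) * (‖lamstar‖ ^ 2 / (2 * ρ) + C * ∑ i ∈ Finset.range k, ε i) := by
  -- Per-step inequality
  have hstep_ineq : ∀ i, g lamstar - g (lam (i + 1)) ≤
      (‖lam i - lamstar‖ ^ 2 - ‖lam (i + 1) - lamstar‖ ^ 2) / (2 * ρ) + C * ε i := by
    intro i
    set x := lam i with hx
    set δ : EuclideanSpace ℝ (Fin m) := lam (i + 1) - x with hδ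
    set w : EuclideanSpace ℝ (Fin m) := lamstar - lam (i + 1) with hw
    have hgrad : gradient g x = ρ⁻¹ • δ - e i := by
      rw [hδ, hstep i]
      rw [add_sub_cancel_left, smul_smul, inv_mul_cancel₀ (ne_of_gt hρ), one_smul]
      abel
    -- concavity
    have hcon := my_concave_grad_ineq g hconc hdiff x lamstar
    -- descent
    have hdes := my_descent ρ hρ g hdiff hlip x (lam (i + 1))
    rw [← hδ] at hdes
    -- combine: g lamstar - g (lam (i+1)) ≤ ⟪∇g x, w⟫ + ‖δ‖²/(2ρ)
    have hcomb : g lamstar - g (lam (i + 1)) ≤ ⟪gradient g x, w⟫ + ‖δ‖ ^ 2 / (2 * ρ) := by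
      have hsplit : ⟪gradient g x, lamstar - x⟫ = ⟪gradient g x, δ⟫ + ⟪gradient g x, w⟫ := by
        rw [← inner_add_right]
        congr 1
        rw [hδ, hw]; abel
      linarith [hcon, hdes, hsplit.le, hsplit.ge]
    -- expand gradient
    have hexp : ⟪gradient g x, w⟫ = ρ⁻¹ * ⟪δ, w⟫ - ⟪e i, w⟫ := by
      rw [hgrad, inner_sub_left, inner_smul_left]
      norm_num
    -- error term bound
    have herr' : -⟪e i, w⟫ ≤ C * ε i := by
      have h1 : -⟪e i, w⟫ ≤ ‖e i‖ * ‖w‖ := by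
        have := abs_real_inner_le_norm (e i) w
        have := neg_abs_le ⟪e i, w⟫
        linarith [abs_real_inner_le_norm (e i) w]
      have hwn : ‖w‖ = ‖lam (i + 1) - lamstar‖ := by rw [hw, norm_sub_rev]
      have hC := hbound i
      have hε := herr i
      have hεnn : (0:ℝ) ≤ ε i := le_trans (norm_nonneg _) hε
      calc -⟪e i, w⟫ ≤ ‖e i‖ * ‖w‖ := h1
        _ ≤ ε i * C := by
            rw [hwn]
            exact mul_le_mul hε hC (norm_nonneg _) hεnn
        _ = C * ε i := mul_comm _ _
    -- key identity
    have hid : ‖x - lamstar‖ ^ 2 - ‖lam (i + 1) - lamstar‖ ^ 2 = ‖δ‖ ^ 2 + 2 * ⟪δ, w⟫ := by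
      have h1 : x - lamstar = (lam (i + 1) - lamstar) - δ := by rw [hδ]; abel
      rw [h1, norm_sub_sq_real]
      have h2 : ⟪lam (i + 1) - lamstar, δ⟫ = -⟪δ, w⟫ := by
        rw [hw, real_inner_comm, ← inner_neg_right]
        congr 1; abel
      rw [h2]; ring
    have hkey : ρ⁻¹ * ⟪δ, w⟫ + ‖δ‖ ^ 2 / (2 * ρ)
        = (‖x - lamstar‖ ^ 2 - ‖lam (i + 1) - lamstar‖ ^ 2) / (2 * ρ) := by
      rw [hid]
      field_simp
      ring
    linarith [hcomb, hexp.le, hexp.ge, hkey.le, hkey.ge, herr']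
  -- sum and telescope
  have hsum : ∑ i ∈ Finset.range k, (g lamstar - g (lam (i + 1))) ≤
      ‖lamstar‖ ^ 2 / (2 * ρ) + C * ∑ i ∈ Finset.range k, ε i := by
    calc ∑ i ∈ Finset.range k, (g lamstar - g (lam (i + 1)))
        ≤ ∑ i ∈ Finset.range k,
          ((‖lam i - lamstar‖ ^ 2 - ‖lam (i + 1) - lamstar‖ ^ 2) / (2 * ρ) + C * ε i) :=
          Finset.sum_le_sum (fun i _ => hstep_ineq i)
      _ = (‖lam 0 - lamstar‖ ^ 2 - ‖lam k - lamstar‖ ^ 2) / (2 * ρ)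
          + C * ∑ i ∈ Finset.range k, ε i := by
          rw [Finset.sum_add_distrib, ← Finset.sum_div,
            Finset.sum_range_sub' (fun i => ‖lam i - lamstar‖ ^ 2), ← Finset.mul_sum]
      _ ≤ ‖lamstar‖ ^ 2 / (2 * ρ) + C * ∑ i ∈ Finset.range k, ε i := by
          have h0 : ‖lam 0 - lamstar‖ = ‖lamstar‖ := by rw [hlam0, zero_sub, norm_neg]
          have hsq : (0:ℝ) ≤ ‖lam k - lamstar‖ ^ 2 := sq_nonneg _
          have h2ρ : (0:ℝ) < 2 * ρ := by linarith
          rw [h0]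
          have : (‖lamstar‖ ^ 2 - ‖lam k - lamstar‖ ^ 2) / (2 * ρ)
              ≤ ‖lamstar‖ ^ 2 / (2 * ρ) := by
            apply (div_le_div_iff_of_pos_right h2ρ).mpr
            linarith
          linarith
  -- Jensen
  have hkpos : (0:ℝ) < (k : ℝ) := by exact_mod_cast hk
  have hkne : (k : ℝ) ≠ 0 := ne_of_gt hkpos
  have hjensen : (k:ℝ)⁻¹ * ∑ i ∈ Finset.Icc 1 k, g (lam i)
      ≤ g ((k : ℝ)⁻¹ • ∑ i ∈ Finset.Icc 1 k, lam i) := by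
    have hcard : (Finset.Icc 1 k).card = k := by rw [Nat.card_Icc]; omega
    have h := hconc.le_map_sum (t := Finset.Icc 1 k) (w := fun _ => (k:ℝ)⁻¹) (p := lam)
      (fun i _ => by positivity)
      (by rw [Finset.sum_const, hcard, nsmul_eq_mul, mul_inv_cancel₀ hkne])
      (fun i _ => Set.mem_univ _)
    calc (k:ℝ)⁻¹ * ∑ i ∈ Finset.Icc 1 k, g (lam i)
        = ∑ i ∈ Finset.Icc 1 k, (k:ℝ)⁻¹ • g (lam i) := by
          rw [Finset.mul_sum]; simp [smul_eq_mul]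
      _ ≤ g (∑ i ∈ Finset.Icc 1 k, (k:ℝ)⁻¹ • lam i) := h
      _ = g ((k : ℝ)⁻¹ • ∑ i ∈ Finset.Icc 1 k, lam i) := by rw [Finset.smul_sum]
  -- reindex
  have hreindex : ∑ i ∈ Finset.Icc 1 k, g (lam i)
      = ∑ i ∈ Finset.range k, g (lam (i + 1)) := by
    rw [← Finset.Ico_add_one_right_eq_Icc, Finset.sum_Ico_eq_sum_range]
    simp [add_comm 1]
  -- finish
  have hfinal : fstar - g ((k : ℝ)⁻¹ • ∑ i ∈ Finset.Icc 1 k, lam i)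
      ≤ (k:ℝ)⁻¹ * ∑ i ∈ Finset.range k, (g lamstar - g (lam (i + 1))) := by
    have : (k:ℝ)⁻¹ * ∑ i ∈ Finset.range k, (g lamstar - g (lam (i + 1)))
        = fstar - (k:ℝ)⁻¹ * ∑ i ∈ Finset.Icc 1 k, g (lam i) := by
      rw [hreindex, Finset.sum_sub_distrib, Finset.sum_const, Finset.card_range,
        nsmul_eq_mul, hfstar]
      field_simp
    rw [this]
    linarith [hjensen]
  calc fstar - g ((k : ℝ)⁻¹ • ∑ i ∈ Finset.Icc 1 k, lam i)
      ≤ (k:ℝ)⁻¹ * ∑ i ∈ Finset.range k, (g lamstar - g (lam (i + 1))) := hfinal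
    _ ≤ (k:ℝ)⁻¹ * (‖lamstar‖ ^ 2 / (2 * ρ) + C * ∑ i ∈ Finset.range k, ε i) :=
        mul_le_mul_of_nonneg_left hsum (by positivity)
    _ = (1 / k) * (‖lamstar‖ ^ 2 / (2 * ρ) + C * ∑ i ∈ Finset.range k, ε i) := by
        rw [one_div]
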